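/- In the gadget graph for one missing entry, if artificial variable X_{j₀} selects the empty parent set and all others select their score-0 parent sets (which include all m original variables as parents), then no original variable can have any artificial variable other than X_{j₀} as a parent without creating a directed cycle; hence X_{j₀} is the only artificial variable of the gadget usable as a parent of original variables. -/

import Mathlib

/-- Base arcs of the gadget graph on original nodes `V` and artificial nodes
`Fin r`, when `X_{j₀}` has the empty parent set and every other `X_j` has as
parents all original variables plus `X_{1+(j mod r)}`. -/
def baseRel (V : Type) (r : ℕ) [NeZero r] (j₀ : Fin r) (a b : V ⊕ Fin r) : Prop :=
  ∃ j : Fin r, j ≠ j₀ ∧ b = Sum.inr j ∧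
    ((∃ v : V, a = Sum.inl v) ∨ a = Sum.inr (j + 1))

/-- Rank function witnessing acyclicity of the gadget graph with arcs added
from `X_{j₀}` to original nodes. -/
def gadgetRank {V : Type} {r : ℕ} [NeZero r] (j₀ : Fin r) : V ⊕ Fin r → ℕ
  | Sum.inl _ => r + 1
  | Sum.inr j => if j = j₀ then r + 2 else (j - j₀).val

lemma gadgetRank_lt {V : Type} {r : ℕ} [NeZero r] (j₀ : Fin r) (W : Set V)
    (x y : V ⊕ Fin r)
    (h : baseRel V r j₀ x y ∨ (x = Sum.inr j₀ ∧ ∃ v ∈ W, y = Sum.inl v)) :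
    gadgetRank j₀ y < gadgetRank j₀ x := by
  rcases h with ⟨j, hj, rfl, hx⟩ | ⟨rfl, v, _, rfl⟩
  · have hy : gadgetRank j₀ (Sum.inr j : V ⊕ Fin r) = (j - j₀).val := by
      simp [gadgetRank, hj]
    rcases hx with ⟨v, rfl⟩ | rfl
    · have : (j - j₀).val < r := (j - j₀).isLt
      simp [gadgetRank, hj]
    · by_cases hj1 : j + 1 = j₀
      · have : (j - j₀).val < r := (j - j₀).isLt
        simp [gadgetRank, hj, hj1]; omega
      · have hne : j - j₀ ≠ 0 := by
          intro h; exact hj (by rwa [sub_eq_zero] at h)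
        have hne1 : (j - j₀) + 1 ≠ 0 := by
          intro h
          apply hj1
          have : j + 1 - j₀ = 0 := by rw [← h]; abel
          rwa [sub_eq_zero] at this
        have hval : ((j - j₀) + 1).val = ((j - j₀).val + 1) % r := by
          simp [Fin.add_def]
        have hlt : (j - j₀).val < r := (j - j₀).isLt
        have hvne : ((j - j₀) + 1).val ≠ 0 := by
          intro h; exact hne1 (Fin.ext h)
        have heq : (j + 1) - j₀ = (j - j₀) + 1 := by abel
        have : ((j - j₀).val + 1) % r = (j - j₀).val + 1 := by
          rcases Nat.lt_or_ge ((j - j₀).val + 1) r with h | h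
          · exact Nat.mod_eq_of_lt h
          · have : (j - j₀).val + 1 = r := by omega
            rw [this] at hval
            simp at hval
            exact absurd hval hne1
        simp only [gadgetRank, hj, if_false, hj1, heq]
        omega
  · simp [gadgetRank]

lemma gadgetRank_transGen_lt {V : Type} {r : ℕ} [NeZero r] (j₀ : Fin r) (W : Set V)
    (a b : V ⊕ Fin r)
    (h : Relation.TransGen
      (fun x y => baseRel V r j₀ x y ∨ (x = Sum.inr j₀ ∧ ∃ v ∈ W, y = Sum.inl v)) a b) :
    gadgetRank j₀ b < gadgetRank j₀ a := by
  induction h with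
  | single h => exact gadgetRank_lt j₀ W _ _ h
  | tail _ h ih => exact lt_trans (gadgetRank_lt j₀ W _ _ h) ih

/-- adding an arc from any artificial variable `X_j` with `j ≠ j₀`
to an original node creates a directed cycle, while adding arcs from `X_{j₀}`
(which has no parents) to any set of original nodes preserves acyclicity. -/
theorem stmt19 (V : Type) [Fintype V] (r : ℕ) [NeZero r] (hr : 2 ≤ r) (j₀ : Fin r) :
    (∀ (j : Fin r) (v : V), j ≠ j₀ →
      ∃ a : V ⊕ Fin r, Relation.TransGen
        (fun x y => baseRel V r j₀ x y ∨ (x = Sum.inr j ∧ y = Sum.inl v)) a a) ∧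
    (∀ W : Set V, ∀ a : V ⊕ Fin r,
      ¬ Relation.TransGen
        (fun x y => baseRel V r j₀ x y ∨ (x = Sum.inr j₀ ∧ ∃ v ∈ W, y = Sum.inl v))
        a a) := by
  constructor
  · intro j v hj
    exact ⟨Sum.inl v, Relation.TransGen.head (b := Sum.inr j)
      (Or.inl ⟨j, hj, rfl, Or.inl ⟨v, rfl⟩⟩)
      (Relation.TransGen.single (Or.inr ⟨rfl, rfl⟩))⟩
  · intro W a h
    exact lt_irrefl _ (gadgetRank_transGen_lt j₀ W a a h)
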